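/- Let X be an α-hyperbolic geodesic metric space, (a,b,c) a geodesic triangle, and p' the point of [b,c] nearest to a. If p' = b, then the distance from b to the side [a,c] is at most 2α. Conversely, if the distance from b to [a,c] is at most 2α, then d(p', b) ≤ 3α. -/
import Mathlib


/-- `s` is (the image of) a geodesic segment from `a` to `b`. -/
def IsGeodesicSegment {X : Type*} [MetricSpace X] (a b : X) (s : Set X) : Prop :=
  ∃ f : ℝ → X, f 0 = a ∧ f (dist a b) = b ∧
    (∀ u ∈ Set.Icc (0:ℝ) (dist a b), ∀ v ∈ Set.Icc (0:ℝ) (dist a b),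
      dist (f u) (f v) = |u - v|) ∧
    s = f '' Set.Icc (0:ℝ) (dist a b)

/-- `X` is a geodesic metric space. -/
def GeodesicSpace (X : Type*) [MetricSpace X] : Prop :=
  ∀ a b : X, ∃ s : Set X, IsGeodesicSegment a b s

/-- The inscribed-triangle form of Gromov hyperbolicity with constant `α`:
every geodesic triangle `(a,b,c)` admits an inscribed triangle `(p,q,r)` with
`p ∈ [bc]`, `q ∈ [ac]`, `r ∈ [ab]`, equal tangency distances, diameter at most `α`,
and each inscribed vertex lies within `α` of the metric projection of the
opposite vertex of the triangle onto the corresponding side. -/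
def GromovHyperbolicWith (α : ℝ) (X : Type*) [MetricSpace X] : Prop :=
  ∀ a b c : X, ∀ sab sbc sac : Set X,
    IsGeodesicSegment a b sab → IsGeodesicSegment b c sbc → IsGeodesicSegment a c sac →
    ∃ p ∈ sbc, ∃ q ∈ sac, ∃ r ∈ sab,
      dist a r = dist a q ∧ dist b p = dist b r ∧ dist c p = dist c q ∧
      dist p q ≤ α ∧ dist q r ≤ α ∧ dist p r ≤ α ∧
      (∀ p' ∈ sbc, dist a p' = Metric.infDist a sbc → dist p p' ≤ α) ∧
      (∀ q' ∈ sac, dist b q' = Metric.infDist b sac → dist q q' ≤ α) ∧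
      (∀ r' ∈ sab, dist c r' = Metric.infDist c sab → dist r r' ≤ α)

/-- Let `p'` be the metric projection of `a` onto the side `[b,c]`.
If `p' = b` then the distance from `b` to `[a,c]` is at most `2α`; conversely, if
the distance from `b` to `[a,c]` is at most `2α`, then `d(p', b) ≤ 3α`. -/

lemma seg_left_mem {X : Type*} [MetricSpace X] {a b : X} {s : Set X}
    (h : IsGeodesicSegment a b s) : a ∈ s := by
  obtain ⟨f, h0, hd, _, hs⟩ := h
  rw [hs]
  exact ⟨0, ⟨le_refl _, dist_nonneg⟩, h0⟩

lemma seg_add {X : Type*} [MetricSpace X] {a b : X} {s : Set X}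
    (h : IsGeodesicSegment a b s) {x : X} (hx : x ∈ s) :
    dist a x + dist x b = dist a b := by
  obtain ⟨f, h0, hd, hiso, hs⟩ := h
  rw [hs] at hx
  obtain ⟨u, hu, rfl⟩ := hx
  have h1 : dist a (f u) = u := by
    rw [← h0, hiso 0 ⟨le_refl _, dist_nonneg⟩ u hu, abs_of_nonpos (by linarith [hu.1])]
    linarith
  have h2 : dist (f u) b = dist a b - u := by
    have h3 := hiso u hu (dist a b) ⟨dist_nonneg, le_refl _⟩
    rw [hd] at h3
    rw [h3, abs_of_nonpos (by linarith [hu.2])]; ring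
  rw [h1, h2]; ring

lemma seg_compact {X : Type*} [MetricSpace X] {a b : X} {s : Set X}
    (h : IsGeodesicSegment a b s) : IsCompact s := by
  obtain ⟨f, h0, hd, hiso, hs⟩ := h
  rw [hs]
  apply isCompact_Icc.image_of_continuousOn
  apply LipschitzOnWith.continuousOn (K := 1)
  intro u hu v hv
  simp only [edist_dist, hiso u hu v hv]
  rw [ENNReal.coe_one, one_mul, Real.dist_eq]

theorem shadow_lemma_stmt2 {X : Type*} [MetricSpace X] (α : ℝ) (hα : 0 ≤ α)
    (hgeo : GeodesicSpace X) (hhyp : GromovHyperbolicWith α X)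
    (a b c : X) (sbc sac : Set X)
    (hbc : IsGeodesicSegment b c sbc) (hac : IsGeodesicSegment a c sac)
    (p' : X) (hp'mem : p' ∈ sbc) (hp'proj : dist a p' = Metric.infDist a sbc) :
    (p' = b → Metric.infDist b sac ≤ 2 * α) ∧
    (Metric.infDist b sac ≤ 2 * α → dist p' b ≤ 3 * α) := by

  obtain ⟨sab, hab⟩ := hgeo a b
  obtain ⟨p, hp, q, hq, r, hr, har, hbp, hcp, hpq, hqr, hpr, hPbc, hPac, hPab⟩ :=
    hhyp a b c sab sbc sac hab hbc hac
  have hpp' : dist p p' ≤ α := hPbc p' hp'mem hp'proj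
  have hbpval : dist b p = (dist a b + dist b c - dist a c) / 2 := by
    have e1 := seg_add hab hr
    have e2 := seg_add hbc hp
    have e3 := seg_add hac hq
    have h4 : dist b p = dist r b := by rw [hbp, dist_comm]
    have c1 : dist p c = dist c p := dist_comm p c
    have c2 : dist q c = dist c q := dist_comm q c
    linarith [h4, e1, e2, e3, har, hcp, c1, c2]
  constructor
  · intro hpb
    have hbmem : b ∈ sbc := seg_left_mem hbc
    have hbproj : dist a b = Metric.infDist a sbc := by rw [← hpb]; exact hp'proj
    have h1 : dist p b ≤ α := hPbc b hbmem hbproj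
    calc Metric.infDist b sac ≤ dist b q := Metric.infDist_le_dist_of_mem hq
      _ ≤ dist b p + dist p q := dist_triangle b p q
      _ ≤ α + α := by rw [dist_comm b p]; exact add_le_add h1 hpq
      _ = 2 * α := by ring
  · intro hinf
    have hne : sac.Nonempty := ⟨a, seg_left_mem hac⟩
    obtain ⟨q₀, hq₀mem, hq₀⟩ := (seg_compact hac).exists_infDist_eq_dist hne b
    have hbq₀ : dist b q₀ ≤ 2 * α := hq₀ ▸ hinf
    have e3 := seg_add hac hq₀mem
    have hab2 : dist a b ≤ dist a q₀ + 2 * α := by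
      calc dist a b ≤ dist a q₀ + dist q₀ b := dist_triangle a q₀ b
        _ ≤ dist a q₀ + 2 * α := by rw [dist_comm q₀ b]; linarith
    have hbc2 : dist b c ≤ 2 * α + dist q₀ c := by
      calc dist b c ≤ dist b q₀ + dist q₀ c := dist_triangle b q₀ c
        _ ≤ 2 * α + dist q₀ c := by linarith
    have hbp2 : dist b p ≤ 2 * α := by rw [hbpval]; linarith
    calc dist p' b ≤ dist p' p + dist p b := dist_triangle p' p b
      _ ≤ α + 2 * α := by
          rw [dist_comm p' p, dist_comm p b]
          exact add_le_add hpp' hbp2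
      _ = 3 * α := by ring
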